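/- For each n ≥ 1, the quotient k-vector space k[x]₀/W_n has dimension q^n(q^n − 1)/2. In particular, W_n is a proper T-space of k[x]₀. -/

import Mathlib

open Polynomial

variable (k : Type*) [Field k] [Fintype k]

/-- `k[x]₀`: the free non-unital associative `k`-algebra on one generator `x`,
identified with the polynomials over `k` with zero constant term,
viewed as a `k`-submodule of `Polynomial k`. -/
noncomputable def A0 : Submodule k (Polynomial k) :=
  LinearMap.ker (Polynomial.aeval (0 : k)).toLinearMap

/-- A `T`-space of `k[x]₀`: a `k`-linear subspace of `k[x]₀` closed under
substitutions `f ↦ f ∘ g` for `g ∈ k[x]₀`. -/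
def IsTSpace (V : Submodule k (Polynomial k)) : Prop :=
  V ≤ A0 k ∧ ∀ f ∈ V, ∀ g ∈ A0 k, f.comp g ∈ V

/-- `H^S`: the smallest `T`-space of `k[x]₀` containing `H`. -/
noncomputable def TSp (H : Set (Polynomial k)) : Submodule k (Polynomial k) :=
  sInf {V | IsTSpace k V ∧ H ⊆ V}

/-- A `T`-ideal of `k[x]₀`: a `T`-space that is also an ideal of `k[x]₀`. -/
def IsTIdeal (V : Submodule k (Polynomial k)) : Prop :=
  IsTSpace k V ∧ ∀ f ∈ V, ∀ g ∈ A0 k, g * f ∈ V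

/-- `H^T`: the smallest `T`-ideal of `k[x]₀` containing `H`. -/
noncomputable def TId (H : Set (Polynomial k)) : Submodule k (Polynomial k) :=
  sInf {V | IsTIdeal k V ∧ H ⊆ V}

/-- `W_n = {x + x^{q^n}}^S + {x^{q^n+1}}^S`, where `q` is the order of `k`. -/
noncomputable def Wn (n : ℕ) : Submodule k (Polynomial k) :=
  TSp k {X + X ^ (Fintype.card k ^ n)} ⊔ TSp k {X ^ (Fintype.card k ^ n + 1)}

/-- `U_n = {x - x^{q^{2n}}}^T`, where `q` is the order of `k`. -/
noncomputable def Un (n : ℕ) : Submodule k (Polynomial k) :=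
  TId k {X - X ^ (Fintype.card k ^ (2 * n))}

-- auxiliary
def PQ (Q : ℕ) : Finset ℕ := (Finset.range (Q * Q)).filter fun r => r / Q < r % Q

abbrev Idx (Q : ℕ) := {r // r ∈ PQ Q}

lemma mem_PQ {Q r : ℕ} : r ∈ PQ Q ↔ r < Q * Q ∧ r / Q < r % Q := by
  simp [PQ, Finset.mem_filter, Finset.mem_range]

lemma digits1 {Q : ℕ} (hQ0 : 0 < Q) (a : ℕ) {b : ℕ} (hb : b < Q) : (a * Q + b) / Q = a := by
  rw [mul_comm a Q, Nat.mul_add_div hQ0, Nat.div_eq_of_lt hb, add_zero]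

lemma digits2 {Q : ℕ} (a : ℕ) {b : ℕ} (hb : b < Q) : (a * Q + b) % Q = b := by
  rw [mul_comm a Q, Nat.mul_add_mod, Nat.mod_eq_of_lt hb]

noncomputable def sig (Q r : ℕ) : Idx Q → k :=
  if h1 : r ∈ PQ Q then Pi.single (⟨r, h1⟩ : Idx Q) 1
  else if h2 : r % Q * Q + r / Q ∈ PQ Q then -(Pi.single (⟨_, h2⟩ : Idx Q) 1)
  else 0

noncomputable def sfun (Q m : ℕ) : Idx Q → k := sig k Q (m % (Q * Q - 1))

noncomputable def theta (Q : ℕ) : Polynomial k →ₗ[k] (Idx Q → k) where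
  toFun f := f.sum fun m a => a • sfun k Q m
  map_add' f g := Polynomial.sum_add_index f g _ (fun m => zero_smul k _)
    (fun m a b => add_smul a b _)
  map_smul' c f := by
    simp only [RingHom.id_apply]
    rw [Polynomial.sum_smul_index f c (fun m a => a • sfun k Q m) (fun m => zero_smul k _)]
    simp only [mul_smul]
    exact (Finset.smul_sum).symm

noncomputable def ell (Q : ℕ) : (Idx Q → k) →ₗ[k] Polynomial k :=
  ∑ i : Idx Q, (LinearMap.proj i).smulRight (X ^ (i : ℕ))

section arith
variable {Q : ℕ}

lemma sig_pair (hQ : 2 ≤ Q) {r : ℕ} (hr : r < Q * Q - 1) :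
    sig k Q r + sig k Q ((r * Q) % (Q * Q - 1)) = 0 := by
  have hQ0 : 0 < Q := by omega
  have hQQ : 1 ≤ Q * Q := Nat.one_le_iff_ne_zero.mpr (by positivity)
  set a := r / Q with ha
  set b := r % Q with hb
  have hrab : r = a * Q + b := by
    have := Nat.div_add_mod r Q
    rw [ha, hb, mul_comm]
    omega
  have hbQ : b < Q := Nat.mod_lt _ hQ0
  have haQ : a < Q := by
    rw [ha]
    exact Nat.div_lt_of_lt_mul (by omega)
  have hne : ¬(a = Q - 1 ∧ b = Q - 1) := by
    rintro ⟨h1, h2⟩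
    have h3 : (Q - 1) * Q = Q * Q - Q := by rw [Nat.sub_mul, one_mul]
    rw [h1, h2] at hrab
    omega
  have hlt : b * Q + a < Q * Q - 1 := by
    rcases Nat.lt_or_ge b (Q - 1) with h | h
    · have h4 : (b + 1) * Q ≤ (Q - 1) * Q := Nat.mul_le_mul_right _ (by omega)
      have h5 : (b + 1) * Q = b * Q + Q := by ring
      have h3 : (Q - 1) * Q = Q * Q - Q := by rw [Nat.sub_mul, one_mul]
      omega
    · have hbq : b = Q - 1 := by omega
      have ha' : a < Q - 1 := by
        rcases Nat.lt_or_ge a (Q - 1) with h' | h'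
        · exact h'
        · exact absurd ⟨by omega, hbq⟩ hne
      have h3 : b * Q = Q * Q - Q := by rw [hbq, Nat.sub_mul, one_mul]
      omega
  have hr' : (r * Q) % (Q * Q - 1) = b * Q + a := by
    have h1 : r * Q = a * (Q * Q - 1) + (b * Q + a) := by
      calc r * Q = a * (Q * Q) + b * Q := by rw [hrab]; ring
        _ = a * ((Q * Q - 1) + 1) + b * Q := by congr 2; omega
        _ = a * (Q * Q - 1) + (b * Q + a) := by ring
    rw [h1, add_comm, Nat.add_mul_mod_self_right]
    exact Nat.mod_eq_of_lt hlt
  have hd1 : (b * Q + a) / Q = b := digits1 hQ0 b haQ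
  have hd2 : (b * Q + a) % Q = a := digits2 b haQ
  rw [hr']
  rcases lt_trichotomy a b with h | h | h
  · have hrP : r ∈ PQ Q := mem_PQ.2 ⟨by omega, by rw [← ha, ← hb]; exact h⟩
    have h2 : (b * Q + a) % Q * Q + (b * Q + a) / Q ∈ PQ Q := by
      rw [hd1, hd2, ← hrab]; exact hrP
    rw [sig, sig, dif_pos hrP,
      dif_neg (show ¬(b * Q + a ∈ PQ Q) by rw [mem_PQ, hd1, hd2]; omega),
      dif_pos h2, add_neg_eq_zero]
    exact congrArg (fun i : Idx Q => Pi.single i (1 : k))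
      (Subtype.ext (show r = (b * Q + a) % Q * Q + (b * Q + a) / Q by
        rw [hd1, hd2]; exact hrab))
  · rw [sig, sig,
      dif_neg (show ¬(r ∈ PQ Q) by rw [mem_PQ, ← ha, ← hb]; omega),
      dif_neg (show ¬(r % Q * Q + r / Q ∈ PQ Q) by
        rw [← ha, ← hb, mem_PQ, digits1 hQ0 b haQ, digits2 b haQ]; omega),
      dif_neg (show ¬(b * Q + a ∈ PQ Q) by rw [mem_PQ, hd1, hd2]; omega),
      dif_neg (show ¬((b * Q + a) % Q * Q + (b * Q + a) / Q ∈ PQ Q) by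
        rw [hd1, hd2, mem_PQ, digits1 hQ0 a hbQ, digits2 a hbQ]; omega)]
    exact add_zero 0
  · have hP' : b * Q + a ∈ PQ Q := mem_PQ.2 ⟨by omega, by rw [hd1, hd2]; exact h⟩
    have h2 : r % Q * Q + r / Q ∈ PQ Q := by rw [← ha, ← hb]; exact hP'
    rw [sig, sig,
      dif_neg (show ¬(r ∈ PQ Q) by rw [mem_PQ, ← ha, ← hb]; omega),
      dif_pos h2, dif_pos hP', neg_add_eq_zero]

lemma N_pos (hQ : 2 ≤ Q) : 0 < Q * Q - 1 := by
  have : 2 * 2 ≤ Q * Q := Nat.mul_le_mul hQ hQ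
  omega

lemma N_fact (hQ : 2 ≤ Q) : (Q + 1) * (Q - 1) = Q * Q - 1 := by
  obtain ⟨c, rfl⟩ : ∃ c, Q = c + 2 := ⟨Q - 2, by omega⟩
  have h1 : (c + 2 + 1) * (c + 2 - 1) = c * c + 4 * c + 3 := by
    have : c + 2 - 1 = c + 1 := by omega
    rw [this]; ring
  have h2 : (c + 2) * (c + 2) = c * c + 4 * c + 4 := by ring
  omega

lemma sfun_rel (hQ : 2 ≤ Q) (t u : ℕ) :
    sfun k Q (t * Q + u) + sfun k Q (u * Q + t) = 0 := by
  have hN := N_pos hQ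
  have hQN : Q < Q * Q - 1 := by
    have : 2 * 2 ≤ Q * Q := Nat.mul_le_mul hQ hQ
    have h2 : Q * 2 ≤ Q * Q := Nat.mul_le_mul_left Q hQ
    omega
  have key : (u * Q + t) % (Q * Q - 1) = ((t * Q + u) % (Q * Q - 1) * Q) % (Q * Q - 1) := by
    have h1 : (t * Q + u) * Q = (Q * Q - 1) * t + (u * Q + t) := by
      have h0 : Q * Q - 1 + 1 = Q * Q := by omega
      calc (t * Q + u) * Q = t * (Q * Q) + u * Q := by ring
        _ = t * (Q * Q - 1 + 1) + u * Q := by rw [h0]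
        _ = (Q * Q - 1) * t + (u * Q + t) := by ring
    calc (u * Q + t) % (Q * Q - 1)
          = ((Q * Q - 1) * t + (u * Q + t)) % (Q * Q - 1) := (Nat.mul_add_mod _ _ _).symm
      _ = ((t * Q + u) * Q) % (Q * Q - 1) := by rw [h1]
      _ = ((t * Q + u) % (Q * Q - 1) * (Q % (Q * Q - 1))) % (Q * Q - 1) := Nat.mul_mod _ _ _
      _ = ((t * Q + u) % (Q * Q - 1) * Q) % (Q * Q - 1) := by rw [Nat.mod_eq_of_lt hQN]
  rw [sfun, sfun, key]
  exact sig_pair k hQ (Nat.mod_lt _ hN)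

lemma sfun_diag (hQ : 2 ≤ Q) (t : ℕ) : sfun k Q (t * (Q + 1)) = 0 := by
  have hN := N_pos hQ
  have hQ0 : 0 < Q := by omega
  have hdvd : (Q + 1) ∣ t * (Q + 1) % (Q * Q - 1) := by
    rw [Nat.dvd_mod_iff ⟨Q - 1, (N_fact hQ).symm⟩]
    exact dvd_mul_left (Q + 1) t
  obtain ⟨c, hc⟩ := hdvd
  have hrN : t * (Q + 1) % (Q * Q - 1) < Q * Q - 1 := Nat.mod_lt _ hN
  have hcQ : c < Q := by
    by_contra h
    push_neg at h
    have : Q * (Q + 1) ≤ (Q + 1) * c := by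
      rw [mul_comm (Q + 1) c]; exact Nat.mul_le_mul_right _ h
    have h4 : (Q + 1) * (Q - 1) ≤ (Q + 1) * Q := Nat.mul_le_mul_left _ (by omega)
    have h5 : Q * (Q + 1) = (Q + 1) * Q := mul_comm _ _
    have h6 := N_fact hQ
    omega
  have hrc : t * (Q + 1) % (Q * Q - 1) = c * Q + c := by rw [hc]; ring
  rw [sfun, hrc, sig,
    dif_neg (show ¬(c * Q + c ∈ PQ Q) by
      rw [mem_PQ, digits1 hQ0 c hcQ, digits2 c hcQ]; omega),
    dif_neg (show ¬((c * Q + c) % Q * Q + (c * Q + c) / Q ∈ PQ Q) by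
      rw [digits1 hQ0 c hcQ, digits2 c hcQ, mem_PQ, digits1 hQ0 c hcQ, digits2 c hcQ]; omega)]

lemma sfun_canon (hQ : 2 ≤ Q) (i : Idx Q) : sfun k Q (i : ℕ) = Pi.single i 1 := by
  have hQ0 : 0 < Q := by omega
  obtain ⟨hlt, hdig⟩ := mem_PQ.1 i.2
  have hrN : (i : ℕ) < Q * Q - 1 := by
    rcases Nat.lt_or_ge (i : ℕ) (Q * Q - 1) with h | h
    · exact h
    · exfalso
      have he : (i : ℕ) = (Q - 1) * Q + (Q - 1) := by
        have h3 : (Q - 1) * Q = Q * Q - Q := by rw [Nat.sub_mul, one_mul]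
        have h4 : Q * 2 ≤ Q * Q := Nat.mul_le_mul_left Q hQ
        omega
      rw [he, digits1 hQ0 _ (by omega), digits2 _ (by omega)] at hdig
      omega
  rw [sfun, Nat.mod_eq_of_lt hrN, sig, dif_pos i.2]

end arith

lemma theta_X_pow (Q m : ℕ) : theta k Q (X ^ m) = sfun k Q m := by
  show (X ^ m : Polynomial k).sum (fun m a => a • sfun k Q m) = sfun k Q m
  rw [X_pow_eq_monomial, Polynomial.sum_monomial_index _ _ (zero_smul k _), one_smul]

lemma ell_apply (Q : ℕ) (v : Idx Q → k) :
    ell k Q v = ∑ i : Idx Q, v i • (X : Polynomial k) ^ (i : ℕ) := by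
  simp [ell, LinearMap.sum_apply, LinearMap.smulRight_apply]

lemma theta_ell {Q : ℕ} (hQ : 2 ≤ Q) (v : Idx Q → k) : theta k Q (ell k Q v) = v := by
  rw [ell_apply, map_sum]
  have h1 : ∀ i : Idx Q, theta k Q (v i • (X : Polynomial k) ^ (i : ℕ)) = Pi.single i (v i) := by
    intro i
    rw [map_smul, theta_X_pow, sfun_canon k hQ]
    ext j
    rcases eq_or_ne i j with rfl | h
    · simp
    · simp [Pi.single_eq_of_ne (Ne.symm h), Pi.single_eq_of_ne h]
  simp_rw [h1]
  exact Finset.univ_sum_single v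

lemma mem_A0 {f : Polynomial k} : f ∈ A0 k ↔ f.eval 0 = 0 := by
  simp [A0, LinearMap.mem_ker, Polynomial.aeval_def, Polynomial.eval]

lemma A0_le_of_X_pow_mem (W : Submodule k (Polynomial k))
    (h : ∀ m, 1 ≤ m → (X : Polynomial k) ^ m ∈ W) : A0 k ≤ W := by
  intro f hf
  have hc0 : f.coeff 0 = 0 := by
    rw [Polynomial.coeff_zero_eq_eval_zero]
    exact mem_A0 k |>.1 hf
  rw [f.as_sum_support]
  refine Submodule.sum_mem _ fun m hm => ?_
  have hm1 : 1 ≤ m := by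
    rcases Nat.eq_zero_or_pos m with rfl | h'
    · exact absurd (Polynomial.mem_support_iff.1 hm) (by simp [hc0])
    · exact h'
  rw [← Polynomial.smul_X_eq_monomial]
  exact Submodule.smul_mem _ _ (h m hm1)

lemma isTSpace_A0 : IsTSpace k (A0 k) := by
  refine ⟨le_rfl, fun f hf g hg => ?_⟩
  rw [mem_A0] at hf hg ⊢
  rw [Polynomial.eval_comp, hg, hf]

lemma TSp_le {H : Set (Polynomial k)} {V : Submodule k (Polynomial k)}
    (hV : IsTSpace k V) (hH : H ⊆ V) : TSp k H ≤ V := sInf_le ⟨hV, hH⟩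

lemma subset_TSp {H : Set (Polynomial k)} : H ⊆ TSp k H := by
  intro f hf
  have : f ∈ TSp k H := Submodule.mem_sInf.2 fun V hV => hV.2 hf
  exact this

lemma isTSpace_TSp {H : Set (Polynomial k)} (hH : H ⊆ A0 k) : IsTSpace k (TSp k H) := by
  constructor
  · exact sInf_le ⟨isTSpace_A0 k, hH⟩
  · intro f hf g hg
    rw [TSp, Submodule.mem_sInf] at hf ⊢
    intro V hV
    exact hV.1.2 f (hf V hV) g hg

lemma comp_mem_TSp {H : Set (Polynomial k)} (hH : H ⊆ A0 k) {f g : Polynomial k}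
    (hf : f ∈ H) (hg : g ∈ A0 k) : f.comp g ∈ TSp k H :=
  (isTSpace_TSp k hH).2 f ((subset_TSp k) hf) g hg

section poly
variable (n : ℕ)

lemma card_k_ge : 2 ≤ Fintype.card k := Fintype.one_lt_card

lemma Qge (hn : 1 ≤ n) : 2 ≤ Fintype.card k ^ n :=
  Nat.one_lt_pow (by omega) (card_k_ge k)

lemma pow_card_pow_poly (f : Polynomial k) :
    f ^ (Fintype.card k ^ n) = Polynomial.expand k (Fintype.card k ^ n) f := by
  induction n with
  | zero => simp [Polynomial.expand_one]
  | succ m ih =>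
    rw [pow_succ, pow_mul, ih, ← FiniteField.expand_card ((Polynomial.expand k (Fintype.card k ^ m)) f),
      Polynomial.expand_expand]
    rw [mul_comm]

lemma X_pow_mem_A0 {m : ℕ} (hm : 1 ≤ m) : (X : Polynomial k) ^ m ∈ A0 k := by
  rw [mem_A0]
  simp [zero_pow (by omega : m ≠ 0)]

lemma gen1_mem_A0 : (X + X ^ (Fintype.card k ^ n) : Polynomial k) ∈ A0 k := by
  rw [mem_A0]
  have h1 : 1 ≤ Fintype.card k ^ n := Nat.one_le_pow _ _ (by have := card_k_ge k; omega)
  simp [zero_pow (by omega : Fintype.card k ^ n ≠ 0)]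

lemma gen2_mem_A0 : (X ^ (Fintype.card k ^ n + 1) : Polynomial k) ∈ A0 k :=
  X_pow_mem_A0 k (by omega)

lemma isTSpace_Wn : IsTSpace k (Wn k n) := by
  have h1 : ({X + X ^ (Fintype.card k ^ n)} : Set (Polynomial k)) ⊆ A0 k := by
    simp [Set.singleton_subset_iff, gen1_mem_A0 k n]
  have h2 : ({X ^ (Fintype.card k ^ n + 1)} : Set (Polynomial k)) ⊆ A0 k := by
    simp [Set.singleton_subset_iff, gen2_mem_A0 k n]
  constructor
  · exact sup_le (isTSpace_TSp k h1).1 (isTSpace_TSp k h2).1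
  · intro f hf g hg
    obtain ⟨p, hp, q, hq, rfl⟩ := Submodule.mem_sup.1 hf
    rw [add_comp]
    exact Submodule.add_mem_sup ((isTSpace_TSp k h1).2 p hp g hg)
      ((isTSpace_TSp k h2).2 q hq g hg)

lemma g1 {t : ℕ} (ht : 1 ≤ t) :
    (X : Polynomial k) ^ t + X ^ (t * (Fintype.card k ^ n)) ∈ Wn k n := by
  have h1 : ({X + X ^ (Fintype.card k ^ n)} : Set (Polynomial k)) ⊆ A0 k := by
    simp [Set.singleton_subset_iff, gen1_mem_A0 k n]
  have hc : (X + X ^ (Fintype.card k ^ n) : Polynomial k).comp (X ^ t)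
      = X ^ t + X ^ (t * (Fintype.card k ^ n)) := by
    simp [add_comp, pow_comp, X_comp, ← pow_mul]
  have := comp_mem_TSp k h1 (Set.mem_singleton _) (X_pow_mem_A0 k ht)
  rw [hc] at this
  exact le_sup_left (α := Submodule k (Polynomial k)) this

lemma g2 {t : ℕ} (ht : 1 ≤ t) :
    (X : Polynomial k) ^ (t * (Fintype.card k ^ n + 1)) ∈ Wn k n := by
  have h2 : ({X ^ (Fintype.card k ^ n + 1)} : Set (Polynomial k)) ⊆ A0 k := by
    simp [Set.singleton_subset_iff, gen2_mem_A0 k n]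
  have hc : (X ^ (Fintype.card k ^ n + 1) : Polynomial k).comp (X ^ t)
      = X ^ (t * (Fintype.card k ^ n + 1)) := by
    simp [pow_comp, X_comp, ← pow_mul]
  have := comp_mem_TSp k h2 (Set.mem_singleton _) (X_pow_mem_A0 k ht)
  rw [hc] at this
  exact le_sup_right (α := Submodule k (Polynomial k)) this

lemma g3 {t u : ℕ} (h : 1 ≤ t + u) :
    (X : Polynomial k) ^ (t * (Fintype.card k ^ n) + u)
      + X ^ (u * (Fintype.card k ^ n) + t) ∈ Wn k n := by
  set Q := Fintype.card k ^ n with hQdef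
  rcases Nat.eq_zero_or_pos u with rfl | hu
  · simpa [add_comm] using g1 k n (t := t) (by omega)
  rcases Nat.eq_zero_or_pos t with rfl | ht
  · simpa [add_comm] using g1 k n (t := u) (by omega)
  have h2 : ({X ^ (Q + 1)} : Set (Polynomial k)) ⊆ A0 k := by
    simp [Set.singleton_subset_iff, hQdef, gen2_mem_A0 k n]
  have hg : (X ^ t + X ^ u : Polynomial k) ∈ A0 k := by
    rw [mem_A0]
    simp [zero_pow (by omega : t ≠ 0), zero_pow (by omega : u ≠ 0)]
  have hcomp : (X ^ (Q + 1) : Polynomial k).comp (X ^ t + X ^ u)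
      = X ^ (t * (Q + 1)) + X ^ (u * (Q + 1)) + (X ^ (t * Q + u) + X ^ (u * Q + t)) := by
    rw [pow_comp, X_comp]
    have he : (X ^ t + X ^ u : Polynomial k) ^ (Q + 1)
        = Polynomial.expand k Q (X ^ t + X ^ u) * (X ^ t + X ^ u) := by
      rw [pow_succ, ← pow_card_pow_poly k n, hQdef]
    rw [he, map_add, map_pow, map_pow, Polynomial.expand_X, ← pow_mul, ← pow_mul]
    simp only [add_mul, mul_add, ← pow_add]
    have e1 : Q * t + t = t * (Q + 1) := by ring
    have e2 : Q * u + u = u * (Q + 1) := by ring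
    have e3 : Q * t + u = t * Q + u := by ring
    have e4 : Q * u + t = u * Q + t := by ring
    rw [e1, e2, e3, e4]
    ring
  have hmem := comp_mem_TSp k h2 (Set.mem_singleton _) hg
  have hmem' : (X ^ (t * (Q + 1)) + X ^ (u * (Q + 1))
      + (X ^ (t * Q + u) + X ^ (u * Q + t)) : Polynomial k) ∈ Wn k n := by
    rw [← hcomp]
    exact le_sup_right (α := Submodule k (Polynomial k)) hmem
  have hsub := Submodule.sub_mem _ hmem'
    (Submodule.add_mem _ (g2 k n (t := t) (by omega)) (g2 k n (t := u) (by omega)))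
  simpa [hQdef, add_sub_cancel_left] using hsub

end poly

section vanish
variable (n : ℕ)

lemma X_mem_A0 : (X : Polynomial k) ∈ A0 k := by
  rw [mem_A0]; simp

lemma expand_X_pow (Q m : ℕ) :
    Polynomial.expand k Q ((X : Polynomial k) ^ m) = X ^ (m * Q) := by
  rw [map_pow, Polynomial.expand_X, ← pow_mul, mul_comm]

lemma theta_gen1_comp (hn : 1 ≤ n) :
    ∀ g ∈ A0 k, theta k (Fintype.card k ^ n)
      (g + Polynomial.expand k (Fintype.card k ^ n) g) = 0 := by
  set Q := Fintype.card k ^ n with hQdef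
  have hQ2 : 2 ≤ Q := Qge k n hn
  set ψ : Polynomial k →ₗ[k] (Idx Q → k) :=
    theta k Q ∘ₗ (LinearMap.id + (Polynomial.expand k Q).toLinearMap) with hψ
  have main : A0 k ≤ LinearMap.ker ψ := by
    apply A0_le_of_X_pow_mem
    intro m hm
    rw [LinearMap.mem_ker, hψ]
    simp only [LinearMap.comp_apply, LinearMap.add_apply, LinearMap.id_apply,
      AlgHom.toLinearMap_apply]
    rw [expand_X_pow, map_add, theta_X_pow, theta_X_pow]
    have := sfun_rel k hQ2 0 m
    simpa using this
  intro g hg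
  have := main hg
  rw [LinearMap.mem_ker, hψ] at this
  simpa using this

lemma theta_bilin (hn : 1 ≤ n) :
    ∀ g ∈ A0 k, ∀ h ∈ A0 k, theta k (Fintype.card k ^ n)
      (Polynomial.expand k (Fintype.card k ^ n) g * h
        + Polynomial.expand k (Fintype.card k ^ n) h * g) = 0 := by
  set Q := Fintype.card k ^ n with hQdef
  have hQ2 : 2 ≤ Q := Qge k n hn
  have step1 : ∀ t, 1 ≤ t → ∀ h ∈ A0 k,
      theta k Q ((X : Polynomial k) ^ (t * Q) * h
        + Polynomial.expand k Q h * X ^ t) = 0 := by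
    intro t ht
    set ψ : Polynomial k →ₗ[k] (Idx Q → k) :=
      theta k Q ∘ₗ (LinearMap.mulLeft k ((X : Polynomial k) ^ (t * Q))
        + LinearMap.mulRight k ((X : Polynomial k) ^ t) ∘ₗ
          (Polynomial.expand k Q).toLinearMap) with hψ
    have main : A0 k ≤ LinearMap.ker ψ := by
      apply A0_le_of_X_pow_mem
      intro u hu
      rw [LinearMap.mem_ker, hψ]
      simp only [LinearMap.comp_apply, LinearMap.add_apply, LinearMap.mulLeft_apply,
        LinearMap.mulRight_apply, AlgHom.toLinearMap_apply]
      rw [expand_X_pow, ← pow_add, ← pow_add, map_add, theta_X_pow, theta_X_pow]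
      exact sfun_rel k hQ2 t u
    intro h hh
    have := main hh
    rw [LinearMap.mem_ker, hψ] at this
    simpa using this
  intro g hg h hh
  set ψ : Polynomial k →ₗ[k] (Idx Q → k) :=
    theta k Q ∘ₗ (LinearMap.mulRight k h ∘ₗ (Polynomial.expand k Q).toLinearMap
      + LinearMap.mulLeft k (Polynomial.expand k Q h)) with hψ
  have main : A0 k ≤ LinearMap.ker ψ := by
    apply A0_le_of_X_pow_mem
    intro t ht
    rw [LinearMap.mem_ker, hψ]
    simp only [LinearMap.comp_apply, LinearMap.add_apply, LinearMap.mulLeft_apply,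
      LinearMap.mulRight_apply, AlgHom.toLinearMap_apply]
    rw [expand_X_pow]
    exact step1 t ht h hh
  have := main hg
  rw [LinearMap.mem_ker, hψ] at this
  simpa using this

lemma theta_quad (hn : 1 ≤ n) :
    ∀ g ∈ A0 k, theta k (Fintype.card k ^ n)
      (Polynomial.expand k (Fintype.card k ^ n) g * g) = 0 := by
  set Q := Fintype.card k ^ n with hQdef
  have hQ2 : 2 ≤ Q := Qge k n hn
  set V3 : Submodule k (Polynomial k) :=
    { carrier := {h | h ∈ A0 k ∧ theta k Q (Polynomial.expand k Q h * h) = 0}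
      zero_mem' := by simp
      add_mem' := by
        rintro a b ⟨haA, ha⟩ ⟨hbA, hb⟩
        refine ⟨Submodule.add_mem _ haA hbA, ?_⟩
        have hexp : Polynomial.expand k Q (a + b) * (a + b)
            = Polynomial.expand k Q a * a + Polynomial.expand k Q b * b
              + (Polynomial.expand k Q a * b + Polynomial.expand k Q b * a) := by
          rw [map_add]; ring
        rw [hexp, map_add, map_add, ha, hb, theta_bilin k n hn a haA b hbA]
        simp
      smul_mem' := by
        rintro c x ⟨hxA, hx⟩
        refine ⟨Submodule.smul_mem _ _ hxA, ?_⟩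
        have hexp : Polynomial.expand k Q (c • x) * (c • x)
            = (c * c) • (Polynomial.expand k Q x * x) := by
          rw [map_smul, smul_mul_assoc, mul_smul_comm, smul_smul]
        rw [hexp, map_smul, hx, smul_zero] } with hV3
  have main : A0 k ≤ V3 := by
    apply A0_le_of_X_pow_mem
    intro m hm
    refine ⟨X_pow_mem_A0 k hm, ?_⟩
    rw [expand_X_pow, ← pow_add]
    have he : m * Q + m = m * (Q + 1) := by ring
    rw [he, theta_X_pow]
    exact sfun_diag k hQ2 m
  intro g hg
  exact (main hg).2

lemma TSp1_le_ker (hn : 1 ≤ n) :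
    TSp k {X + X ^ (Fintype.card k ^ n)}
      ≤ LinearMap.ker (theta k (Fintype.card k ^ n)) := by
  set Q := Fintype.card k ^ n with hQdef
  set V1 : Submodule k (Polynomial k) :=
    Submodule.span k ((fun g => (X + X ^ Q : Polynomial k).comp g) '' (A0 k)) with hV1
  have hV1A0 : V1 ≤ A0 k := by
    rw [hV1, Submodule.span_le]
    rintro _ ⟨g, hg, rfl⟩
    exact (isTSpace_A0 k).2 _ (gen1_mem_A0 k n) g hg
  have hV1T : IsTSpace k V1 := by
    refine ⟨hV1A0, ?_⟩
    intro f hf g hg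
    induction hf using Submodule.span_induction with
    | mem x hx =>
      obtain ⟨g', hg', rfl⟩ := hx
      rw [Polynomial.comp_assoc]
      exact Submodule.subset_span ⟨g'.comp g, (isTSpace_A0 k).2 g' hg' g hg, rfl⟩
    | zero => rw [zero_comp]; exact Submodule.zero_mem _
    | add a b _ _ ha hb => rw [add_comp]; exact Submodule.add_mem _ ha hb
    | smul c a _ ha => rw [smul_comp]; exact Submodule.smul_mem _ _ ha
  have hgen : (X + X ^ Q : Polynomial k) ∈ V1 :=
    Submodule.subset_span ⟨X, X_mem_A0 k, by simp [comp_X]⟩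
  refine le_trans (TSp_le k hV1T (Set.singleton_subset_iff.2 hgen)) ?_
  rw [hV1, Submodule.span_le]
  rintro _ ⟨g, hg, rfl⟩
  have hc : (X + X ^ Q : Polynomial k).comp g = g + Polynomial.expand k Q g := by
    rw [add_comp, X_comp, pow_comp, X_comp, pow_card_pow_poly k n]
  simp only [SetLike.mem_coe, LinearMap.mem_ker, hc]
  exact theta_gen1_comp k n hn g hg

lemma TSp2_le_ker (hn : 1 ≤ n) :
    TSp k {X ^ (Fintype.card k ^ n + 1)}
      ≤ LinearMap.ker (theta k (Fintype.card k ^ n)) := by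
  set Q := Fintype.card k ^ n with hQdef
  set V2 : Submodule k (Polynomial k) :=
    Submodule.span k ((fun g => (X ^ (Q + 1) : Polynomial k).comp g) '' (A0 k)) with hV2
  have hV2A0 : V2 ≤ A0 k := by
    rw [hV2, Submodule.span_le]
    rintro _ ⟨g, hg, rfl⟩
    exact (isTSpace_A0 k).2 _ (gen2_mem_A0 k n) g hg
  have hV2T : IsTSpace k V2 := by
    refine ⟨hV2A0, ?_⟩
    intro f hf g hg
    induction hf using Submodule.span_induction with
    | mem x hx =>
      obtain ⟨g', hg', rfl⟩ := hx
      rw [Polynomial.comp_assoc]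
      exact Submodule.subset_span ⟨g'.comp g, (isTSpace_A0 k).2 g' hg' g hg, rfl⟩
    | zero => rw [zero_comp]; exact Submodule.zero_mem _
    | add a b _ _ ha hb => rw [add_comp]; exact Submodule.add_mem _ ha hb
    | smul c a _ ha => rw [smul_comp]; exact Submodule.smul_mem _ _ ha
  have hgen : (X ^ (Q + 1) : Polynomial k) ∈ V2 :=
    Submodule.subset_span ⟨X, X_mem_A0 k, by simp [comp_X]⟩
  refine le_trans (TSp_le k hV2T (Set.singleton_subset_iff.2 hgen)) ?_
  rw [hV2, Submodule.span_le]
  rintro _ ⟨g, hg, rfl⟩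
  have hc : (X ^ (Q + 1) : Polynomial k).comp g = Polynomial.expand k Q g * g := by
    rw [pow_comp, X_comp, pow_succ, pow_card_pow_poly k n]
  simp only [SetLike.mem_coe, LinearMap.mem_ker, hc]
  exact theta_quad k n hn g hg

lemma Wn_le_ker (hn : 1 ≤ n) :
    Wn k n ≤ LinearMap.ker (theta k (Fintype.card k ^ n)) :=
  sup_le (TSp1_le_ker k n hn) (TSp2_le_ker k n hn)

end vanish

lemma ell_single (Q : ℕ) (i : Idx Q) : ell k Q (Pi.single i 1) = X ^ (i : ℕ) := by
  rw [ell_apply, Finset.sum_eq_single i]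
  · simp
  · intro j _ hj
    rw [Pi.single_eq_of_ne hj, zero_smul]
  · intro hi
    exact absurd (Finset.mem_univ i) hi

lemma reduction_aux {Q : ℕ} (hQ2 : 2 ≤ Q) (W : Submodule k (Polynomial k))
    (hg2 : ∀ t, 1 ≤ t → (X : Polynomial k) ^ (t * (Q + 1)) ∈ W)
    (hg3 : ∀ t u, 1 ≤ t + u →
      (X : Polynomial k) ^ (t * Q + u) + X ^ (u * Q + t) ∈ W) :
    ∀ m, 1 ≤ m → (X : Polynomial k) ^ m - ell k Q (sfun k Q m) ∈ W := by
  have hQ0 : 0 < Q := by omega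
  have hN : 0 < Q * Q - 1 := N_pos hQ2
  intro m
  induction m using Nat.strong_induction_on with
  | _ m ih =>
    intro hm
    obtain ⟨a, b, hbQ, hmab⟩ : ∃ a b, b < Q ∧ m = a * Q + b :=
      ⟨m / Q, m % Q, Nat.mod_lt _ hQ0, by rw [mul_comm]; exact (Nat.div_add_mod m Q).symm⟩
    have hda : m / Q = a := by rw [hmab, digits1 hQ0 a hbQ]
    have hdb : m % Q = b := by rw [hmab, digits2 a hbQ]
    rcases Nat.lt_or_ge m (Q * Q) with hlt | hge
    · have haQ : a < Q := by rw [← hda]; exact Nat.div_lt_of_lt_mul (by omega)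
      rcases Nat.lt_or_ge m (Q * Q - 1) with hltN | hgeN
      · -- m < N
        have hmod : m % (Q * Q - 1) = m := Nat.mod_eq_of_lt hltN
        rcases lt_trichotomy a b with h | h | h
        · have hP : m ∈ PQ Q := mem_PQ.2 ⟨by omega, by rw [hda, hdb]; exact h⟩
          have hs : sfun k Q m = Pi.single (⟨m, hP⟩ : Idx Q) 1 := by
            rw [sfun, hmod, sig, dif_pos hP]
          rw [hs, ell_single]
          have hcoe : ((⟨m, hP⟩ : Idx Q) : ℕ) = m := rfl
          rw [hcoe, sub_self]
          exact Submodule.zero_mem _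
        · have haQ1 : a * (Q + 1) = a * Q + a := by ring
          have ha1 : 1 ≤ a := by
            rcases Nat.eq_zero_or_pos a with h0 | h1
            · exfalso; rw [h0, zero_mul, zero_add] at hmab; omega
            · exact h1
          have hs : sfun k Q m = 0 := by
            rw [sfun, hmod, sig,
              dif_neg (show ¬(m ∈ PQ Q) by rw [mem_PQ, hda, hdb]; omega),
              dif_neg (show ¬(m % Q * Q + m / Q ∈ PQ Q) by
                rw [hda, hdb, mem_PQ, digits1 hQ0 b haQ, digits2 b haQ]; omega)]
          rw [hs, map_zero, sub_zero]
          have he : m = a * (Q + 1) := by omega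
          rw [he]
          exact hg2 a ha1
        · have ha1 : 1 ≤ a := by omega
          have hbd : b * Q + a < Q * Q := by
            have h5 : b * Q ≤ (Q - 1) * Q := Nat.mul_le_mul_right _ (by omega)
            have h3 : (Q - 1) * Q = Q * Q - Q := by rw [Nat.sub_mul, one_mul]
            have h6 : Q * 2 ≤ Q * Q := Nat.mul_le_mul_left Q hQ2
            omega
          have hP' : b * Q + a ∈ PQ Q := mem_PQ.2
            ⟨hbd, by rw [digits1 hQ0 b haQ, digits2 b haQ]; exact h⟩
          have h2' : m % Q * Q + m / Q ∈ PQ Q := by rw [hda, hdb]; exact hP'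
          have hs : sfun k Q m = -(Pi.single (⟨m % Q * Q + m / Q, h2'⟩ : Idx Q) 1) := by
            rw [sfun, hmod, sig,
              dif_neg (show ¬(m ∈ PQ Q) by rw [mem_PQ, hda, hdb]; omega),
              dif_pos h2']
          rw [hs, map_neg, ell_single, sub_neg_eq_add]
          have hcoe : ((⟨m % Q * Q + m / Q, h2'⟩ : Idx Q) : ℕ) = b * Q + a := by
            show m % Q * Q + m / Q = b * Q + a
            rw [hda, hdb]
          rw [hcoe]
          have hrel := hg3 a b (by omega)
          rw [← hmab] at hrel
          exact hrel
      · -- m = Q*Q - 1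
        have hm' : m = Q * Q - 1 := by omega
        have hmod : m % (Q * Q - 1) = 0 := by rw [hm', Nat.mod_self]
        have hs : sfun k Q m = 0 := by
          rw [sfun, hmod, sig,
            dif_neg (show ¬((0 : ℕ) ∈ PQ Q) by simp [mem_PQ]),
            dif_neg (show ¬((0 : ℕ) % Q * Q + 0 / Q ∈ PQ Q) by simp [mem_PQ])]
        rw [hs, map_zero, sub_zero, hm', ← N_fact hQ2, mul_comm]
        exact hg2 (Q - 1) (by omega)
    · -- m ≥ Q*Q
      have htQ : Q ≤ a := by
        rw [← hda]
        exact (Nat.le_div_iff_mul_le hQ0).2 hge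
      have hlt' : b * Q + a < m := by
        have h1 : b * (Q - 1) < a * (Q - 1) :=
          (Nat.mul_lt_mul_right (by omega)).2 (by omega)
        have e1 : b * Q = b * (Q - 1) + b := by
          conv_lhs => rw [show Q = (Q - 1) + 1 from by omega]
          ring
        have e2 : a * Q = a * (Q - 1) + a := by
          conv_lhs => rw [show Q = (Q - 1) + 1 from by omega]
          ring
        omega
      have hpos : 1 ≤ b * Q + a := by omega
      have hrel := hg3 a b (by omega)
      have hIH := ih (b * Q + a) hlt' hpos
      have hs : sfun k Q (a * Q + b) = -(sfun k Q (b * Q + a)) :=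
        eq_neg_of_add_eq_zero_left (sfun_rel k hQ2 a b)
      rw [hmab, hs, map_neg, sub_neg_eq_add]
      have hsub := Submodule.sub_mem _ hrel hIH
      have he : (X : Polynomial k) ^ (a * Q + b) + X ^ (b * Q + a)
          - (X ^ (b * Q + a) - ell k Q (sfun k Q (b * Q + a)))
          = X ^ (a * Q + b) + ell k Q (sfun k Q (b * Q + a)) := by ring
      rw [he] at hsub
      exact hsub

lemma Idx_pos {Q : ℕ} (i : Idx Q) : 1 ≤ (i : ℕ) := by
  obtain ⟨-, hdig⟩ := mem_PQ.1 i.2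
  by_contra h0
  push_neg at h0
  interval_cases h : (i : ℕ)
  · simp [h] at hdig

lemma ell_mem_A0 {Q : ℕ} (v : Idx Q → k) : ell k Q v ∈ A0 k := by
  rw [ell_apply]
  refine Submodule.sum_mem _ fun i _ => Submodule.smul_mem _ _ ?_
  exact X_pow_mem_A0 k (Idx_pos i)

lemma PQ_card (Q : ℕ) : (PQ Q).card = Q * (Q - 1) / 2 := by
  have hbij : (PQ Q).card = ((Finset.range Q).sigma fun b => Finset.range b).card := by
    apply Finset.card_nbij' (fun r => (⟨r % Q, r / Q⟩ : (_ : ℕ) × ℕ))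
      (fun p => p.2 * Q + p.1)
    · intro r hr
      obtain ⟨hlt, hdig⟩ := mem_PQ.1 hr
      have hQ0 : 0 < Q := by
        rcases Nat.eq_zero_or_pos Q with rfl | h
        · simp at hlt
        · exact h
      rw [Finset.mem_coe, Finset.mem_sigma, Finset.mem_range, Finset.mem_range]
      exact ⟨Nat.mod_lt _ hQ0, hdig⟩
    · rintro ⟨b, a⟩ hp
      rw [Finset.mem_coe, Finset.mem_sigma, Finset.mem_range, Finset.mem_range] at hp
      dsimp only at hp
      obtain ⟨hbQ, hab⟩ := hp
      have hQ0 : 0 < Q := by omega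
      have hbd : a * Q + b < Q * Q := by
        have h1 : (a + 1) * Q ≤ Q * Q := Nat.mul_le_mul_right _ (by omega)
        have h2 : (a + 1) * Q = a * Q + Q := by ring
        omega
      exact mem_PQ.2 ⟨hbd, by rw [digits1 hQ0 a hbQ, digits2 a hbQ]; omega⟩
    · intro r hr
      obtain ⟨hlt, -⟩ := mem_PQ.1 hr
      have hQ0 : 0 < Q := by
        rcases Nat.eq_zero_or_pos Q with rfl | h
        · simp at hlt
        · exact h
      show r / Q * Q + r % Q = r
      rw [mul_comm]
      exact Nat.div_add_mod r Q
    · rintro ⟨b, a⟩ hp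
      rw [Finset.mem_coe, Finset.mem_sigma, Finset.mem_range, Finset.mem_range] at hp
      dsimp only at hp
      obtain ⟨hbQ, hab⟩ := hp
      have hQ0 : 0 < Q := by omega
      show (⟨(a * Q + b) % Q, (a * Q + b) / Q⟩ : (_ : ℕ) × ℕ) = ⟨b, a⟩
      rw [digits1 hQ0 a hbQ, digits2 a hbQ]
  rw [hbij, Finset.card_sigma]
  simp only [Finset.card_range]
  exact Finset.sum_range_id Q


/-- For each `n ≥ 1`, `dim k[x]₀/W_n = q^n (q^n - 1)/2`; in particular `W_n` is a
proper `T`-space of `k[x]₀`. -/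
theorem finrank_quotient_Wn (n : ℕ) (hn : 1 ≤ n) :
    Module.finrank k (↥(A0 k) ⧸ (Wn k n).comap (A0 k).subtype) =
      Fintype.card k ^ n * (Fintype.card k ^ n - 1) / 2 ∧
    IsTSpace k (Wn k n) ∧ Wn k n ≠ A0 k := by
  have hQ2 : 2 ≤ Fintype.card k ^ n := Qge k n hn
  have hred : ∀ f ∈ A0 k,
      f - ell k (Fintype.card k ^ n) (theta k (Fintype.card k ^ n) f) ∈ Wn k n := by
    intro f hf
    have hsub : A0 k ≤ (Wn k n).comap
        (LinearMap.id - (ell k (Fintype.card k ^ n)) ∘ₗ (theta k (Fintype.card k ^ n))) := by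
      apply A0_le_of_X_pow_mem
      intro m hm
      rw [Submodule.mem_comap]
      simp only [LinearMap.sub_apply, LinearMap.id_apply, LinearMap.comp_apply]
      rw [theta_X_pow]
      exact reduction_aux k hQ2 (Wn k n) (fun t ht => g2 k n ht) (fun t u h => g3 k n h) m hm
    have := hsub hf
    rw [Submodule.mem_comap] at this
    simpa using this
  have hWker := Wn_le_ker k n hn
  have hker : (Wn k n).comap (A0 k).subtype
      = LinearMap.ker ((theta k (Fintype.card k ^ n)) ∘ₗ (A0 k).subtype) := by
    ext x
    simp only [Submodule.mem_comap, LinearMap.mem_ker, LinearMap.comp_apply,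
      Submodule.coe_subtype]
    constructor
    · intro hx
      exact hWker hx
    · intro hx
      have := hred x.1 x.2
      rw [hx, map_zero, sub_zero] at this
      exact this
  have hsurj : Function.Surjective
      ((theta k (Fintype.card k ^ n)) ∘ₗ (A0 k).subtype) := by
    intro v
    refine ⟨⟨ell k (Fintype.card k ^ n) v, ell_mem_A0 k v⟩, ?_⟩
    simpa using theta_ell k hQ2 v
  refine ⟨?_, isTSpace_Wn k n, ?_⟩
  · rw [hker]
    rw [(LinearMap.quotKerEquivOfSurjective _ hsurj).finrank_eq,
      Module.finrank_fintype_fun_eq_card, Fintype.card_coe, PQ_card]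
  · intro hEq
    have hX : (X : Polynomial k) ∈ Wn k n := by rw [hEq]; exact X_mem_A0 k
    have h0 : theta k (Fintype.card k ^ n) X = 0 := hWker hX
    have h1P : (1 : ℕ) ∈ PQ (Fintype.card k ^ n) := by
      refine mem_PQ.2 ⟨?_, ?_⟩
      · have : 2 * 2 ≤ Fintype.card k ^ n * (Fintype.card k ^ n) :=
          Nat.mul_le_mul hQ2 hQ2
        omega
      · rw [Nat.div_eq_of_lt (by omega), Nat.mod_eq_of_lt (by omega)]
        omega
    have h1N : (1 : ℕ) < Fintype.card k ^ n * (Fintype.card k ^ n) - 1 := by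
      have : 2 * 2 ≤ Fintype.card k ^ n * (Fintype.card k ^ n) :=
        Nat.mul_le_mul hQ2 hQ2
      omega
    have hs1 : theta k (Fintype.card k ^ n) X
        = Pi.single (⟨1, h1P⟩ : Idx (Fintype.card k ^ n)) 1 := by
      rw [← pow_one (X : Polynomial k), theta_X_pow, sfun, Nat.mod_eq_of_lt h1N, sig,
        dif_pos h1P]
    rw [hs1] at h0
    have := congrFun h0 ⟨1, h1P⟩
    rw [Pi.single_eq_same] at this
    exact one_ne_zero this
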